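/- Let φ : [0,∞) → ℝ be a bounded, measurable, integrable function with φ(t) > 0 for all t ≥ 0 and ∫₀^∞ φ(t) dt = 1 (the critical unstable condition), and let μ : [0,∞) → ℝ be a bounded measurable function with μ(t) > 0 for all t ≥ 0 and lim_{t→∞} μ(t) = μ∞ > 0. Then the unique locally bounded measurable solution λ̄ of the Volterra integral equation λ̄(t) = μ(t) + ∫₀ᵗ φ(t−s) λ̄(s) ds satisfies lim_{t→∞} λ̄(t) = ∞. -/

import Mathlib

open MeasureTheory Filter

/-- A function `f : ℝ → ℝ` is locally bounded on `[0, ∞)`. -/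
def LocallyBddOn (f : ℝ → ℝ) : Prop :=
  ∀ T : ℝ, ∃ C : ℝ, ∀ t ∈ Set.Icc (0 : ℝ) T, |f t| ≤ C

/-- `lam` solves the Volterra integral equation
`λ̄(t) = μ(t) + ∫₀ᵗ φ(t−s) λ̄(s) ds` for all `t ≥ 0`. -/
def VolterraSol (φ μ lam : ℝ → ℝ) : Prop :=
  ∀ t : ℝ, 0 ≤ t → lam t = μ t + ∫ s in (0 : ℝ)..t, φ (t - s) * lam s

/-- Integrability helper: a product `φ(t - s) * f s` of bounded measurable
functions is integrable on `[0, t]`. -/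
lemma volterra_aux_integrable (φ f : ℝ → ℝ) (hφ : Measurable φ) (hf : Measurable f)
    (t Cφ M : ℝ) (hCφ : ∀ s : ℝ, 0 ≤ s → |φ s| ≤ Cφ)
    (hM : ∀ s ∈ Set.Icc (0:ℝ) t, |f s| ≤ M) :
    IntegrableOn (fun s => φ (t - s) * f s) (Set.Icc 0 t) := by
  apply MeasureTheory.Measure.integrableOn_of_bounded (M := Cφ * M)
  · exact (measure_Icc_lt_top).ne
  · exact ((hφ.comp (measurable_const.sub measurable_id)).mul hf).aestronglyMeasurable
  · filter_upwards [ae_restrict_mem measurableSet_Icc] with s hs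
    have h1 : (0:ℝ) ≤ t - s := by linarith [hs.2]
    have hb := hCφ (t - s) h1
    have h2 := hM s hs
    calc ‖φ (t - s) * f s‖ = |φ (t - s)| * |f s| := abs_mul _ _
    _ ≤ Cφ * M := mul_le_mul hb h2 (abs_nonneg _) (le_trans (abs_nonneg _) hb)

lemma volterra_aux_intervalIntegrable (φ f : ℝ → ℝ) (hφ : Measurable φ) (hf : Measurable f)
    (t Cφ M a b : ℝ) (hCφ : ∀ s : ℝ, 0 ≤ s → |φ s| ≤ Cφ)
    (hM : ∀ s ∈ Set.Icc (0:ℝ) t, |f s| ≤ M)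
    (ha : 0 ≤ a) (hab : a ≤ b) (hb : b ≤ t) :
    IntervalIntegrable (fun s => φ (t - s) * f s) volume a b := by
  have h := volterra_aux_integrable φ f hφ hf t Cφ M hCφ hM
  have hsub : Set.uIcc a b ⊆ Set.Icc 0 t := by
    rw [Set.uIcc_of_le hab]
    exact Set.Icc_subset_Icc ha hb
  exact (h.mono_set hsub).intervalIntegrable

theorem volterra_critical_blowup
    (φ μ lam : ℝ → ℝ) (μinf : ℝ)
    (hφ_meas : Measurable φ)
    (hφ_pos : ∀ t : ℝ, 0 ≤ t → 0 < φ t)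
    (hφ_bdd : ∃ C : ℝ, ∀ t : ℝ, 0 ≤ t → φ t ≤ C)
    (hφ_int : IntegrableOn φ (Set.Ioi 0))
    (hφ_crit : ∫ t in Set.Ioi (0 : ℝ), φ t = 1)
    (hμ_meas : Measurable μ)
    (hμ_pos : ∀ t : ℝ, 0 ≤ t → 0 < μ t)
    (hμ_bdd : ∃ C : ℝ, ∀ t : ℝ, 0 ≤ t → |μ t| ≤ C)
    (hμinf_pos : 0 < μinf)
    (hμ_lim : Tendsto μ atTop (nhds μinf))
    (hlam_meas : Measurable lam)
    (hlam_locbdd : LocallyBddOn lam)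
    (hlam_sol : VolterraSol φ μ lam) :
    Tendsto lam atTop atTop := by
  obtain ⟨Cφ, hCφ'⟩ := hφ_bdd
  have hCφ_pos : 0 < Cφ := lt_of_lt_of_le (hφ_pos 0 le_rfl) (hCφ' 0 le_rfl)
  have hCφ : ∀ s : ℝ, 0 ≤ s → |φ s| ≤ Cφ := fun s hs => by
    rw [abs_of_pos (hφ_pos s hs)]; exact hCφ' s hs
  -- Step 1 : lam is nonnegative on [0, ∞), by a Gronwall-type iteration
  have hlam_nonneg : ∀ t : ℝ, 0 ≤ t → 0 ≤ lam t := by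
    intro t0 ht0
    obtain ⟨C, hC⟩ := hlam_locbdd t0
    set M : ℝ := max C 0 with hMdef
    have hM0 : 0 ≤ M := le_max_right _ _
    have hM : ∀ s ∈ Set.Icc (0:ℝ) t0, |lam s| ≤ M := fun s hs =>
      (hC s hs).trans (le_max_left _ _)
    have key : ∀ n : ℕ, ∀ t ∈ Set.Icc (0:ℝ) t0,
        -lam t ≤ M * (Cφ * t) ^ n / n.factorial := by
      intro n
      induction n with
      | zero =>
        intro t ht
        simpa using (neg_le_abs (lam t)).trans (hM t ht)
      | succ n ih =>
        intro t ht
        have ht0' : (0:ℝ) ≤ t := ht.1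
        have heq := hlam_sol t ht0'
        -- bound the integral
        have hIl : IntervalIntegrable (fun s => φ (t - s) * (-lam s)) volume 0 t :=
          volterra_aux_intervalIntegrable φ (fun s => -lam s) hφ_meas hlam_meas.neg
            t Cφ M 0 t hCφ (fun s hs => by
              rw [abs_neg]; exact hM s (Set.Icc_subset_Icc_right ht.2 hs))
            le_rfl ht0' le_rfl
        have hBn_bdd : ∀ s ∈ Set.Icc (0:ℝ) t, |M * (Cφ * s) ^ n / n.factorial| ≤
            M * (Cφ * t) ^ n / n.factorial := by
          intro s hs
          have h1 : (0:ℝ) ≤ Cφ * s := mul_nonneg hCφ_pos.le hs.1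
          have h2 : Cφ * s ≤ Cφ * t := mul_le_mul_of_nonneg_left hs.2 hCφ_pos.le
          rw [abs_of_nonneg (by positivity)]
          apply div_le_div_of_nonneg_right ?_ (by positivity)
          exact mul_le_mul_of_nonneg_left (pow_le_pow_left₀ h1 h2 n) hM0
        have hIB : IntervalIntegrable
            (fun s => φ (t - s) * (M * (Cφ * s) ^ n / n.factorial)) volume 0 t :=
          volterra_aux_intervalIntegrable φ _ hφ_meas
            ((((measurable_id.const_mul Cφ).pow_const n).const_mul M).div_const _)
            t Cφ (M * (Cφ * t) ^ n / n.factorial) 0 t hCφ hBn_bdd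
            le_rfl ht0' le_rfl
        have hICB : IntervalIntegrable
            (fun s => Cφ * (M * (Cφ * s) ^ n / n.factorial)) volume 0 t :=
          (Continuous.intervalIntegrable (by fun_prop) _ _)
        have step1 : -lam t ≤ ∫ s in (0:ℝ)..t, φ (t - s) * (-lam s) := by
          have hμt := hμ_pos t ht0'
          have : ∫ s in (0:ℝ)..t, φ (t - s) * (-lam s)
              = -∫ s in (0:ℝ)..t, φ (t - s) * lam s := by
            rw [← intervalIntegral.integral_neg]
            congr 1; ext s; ring
          rw [this, heq]
          linarith
        have step2 : ∫ s in (0:ℝ)..t, φ (t - s) * (-lam s)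
            ≤ ∫ s in (0:ℝ)..t, φ (t - s) * (M * (Cφ * s) ^ n / n.factorial) := by
          apply intervalIntegral.integral_mono_on ht0' hIl hIB
          intro s hs
          have hts : (0:ℝ) ≤ t - s := by linarith [hs.2]
          apply mul_le_mul_of_nonneg_left _ (hφ_pos _ hts).le
          exact ih s ⟨hs.1, hs.2.trans ht.2⟩
        have step3 : ∫ s in (0:ℝ)..t, φ (t - s) * (M * (Cφ * s) ^ n / n.factorial)
            ≤ ∫ s in (0:ℝ)..t, Cφ * (M * (Cφ * s) ^ n / n.factorial) := by
          apply intervalIntegral.integral_mono_on ht0' hIB hICB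
          intro s hs
          have hts : (0:ℝ) ≤ t - s := by linarith [hs.2]
          have hB : (0:ℝ) ≤ M * (Cφ * s) ^ n / n.factorial := by
            have : (0:ℝ) ≤ Cφ * s := mul_nonneg hCφ_pos.le hs.1
            positivity
          apply mul_le_mul_of_nonneg_right _ hB
          have := hCφ (t - s) hts
          rwa [abs_of_pos (hφ_pos _ hts)] at this
        have step4 : ∫ s in (0:ℝ)..t, Cφ * (M * (Cφ * s) ^ n / n.factorial)
            = M * (Cφ * t) ^ (n + 1) / (n + 1).factorial := by
          have : ∀ s : ℝ, Cφ * (M * (Cφ * s) ^ n / n.factorial)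
              = (Cφ * M * Cφ ^ n / n.factorial) * s ^ n := by
            intro s; rw [mul_pow]; ring
          simp only [this]
          rw [intervalIntegral.integral_const_mul, integral_pow]
          rw [Nat.factorial_succ]
          have hfac : (0:ℝ) < n.factorial := by positivity
          field_simp
          push_cast
          ring
        calc -lam t ≤ _ := step1
        _ ≤ _ := step2
        _ ≤ _ := step3
        _ = _ := step4
    have hlim : Tendsto (fun n : ℕ => M * (Cφ * t0) ^ n / n.factorial) atTop (nhds 0) := by
      have := (FloorSemiring.tendsto_pow_div_factorial_atTop (Cφ * t0)).const_mul M
      simpa [mul_div_assoc] using this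
    have : -lam t0 ≤ 0 :=
      ge_of_tendsto' hlim (fun n => key n t0 ⟨ht0, le_rfl⟩)
    linarith
  -- Step 2 : induction, lam t ≥ n * μinf / 2 eventually
  set δ : ℝ := μinf / 2 with hδdef
  have hδpos : 0 < δ := by positivity
  have main : ∀ n : ℕ, ∃ T : ℝ, 0 ≤ T ∧ ∀ t : ℝ, T ≤ t → (n : ℝ) * δ ≤ lam t := by
    intro n
    induction n with
    | zero =>
      exact ⟨0, le_rfl, fun t ht => by simpa using hlam_nonneg t ht⟩
    | succ n ih =>
      obtain ⟨T, hT0, hT⟩ := ih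
      set ε : ℝ := μinf / (4 * ((n : ℝ) * δ + 1)) with hεdef
      have hnδ0 : (0:ℝ) ≤ (n : ℝ) * δ := by positivity
      have hεpos : 0 < ε := by positivity
      have hεkey : (n : ℝ) * δ * ε ≤ μinf / 4 := by
        have hne : (n : ℝ) * δ + 1 ≠ 0 := by positivity
        have h2 : ((n : ℝ) * δ + 1) * ε = μinf / 4 := by
          rw [hεdef]; field_simp
        nlinarith [hεpos]
      have h1 : ∀ᶠ t in atTop, 1 - ε ≤ ∫ s in (0:ℝ)..(t - T), φ s := by
        have htend : Tendsto (fun t : ℝ => t - T) atTop atTop :=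
          tendsto_atTop_add_const_right atTop (-T) tendsto_id
        have := MeasureTheory.intervalIntegral_tendsto_integral_Ioi 0 hφ_int htend
        rw [hφ_crit] at this
        exact this.eventually (eventually_ge_nhds (by linarith))
      have h2 : ∀ᶠ t in atTop, μinf - μinf / 4 ≤ μ t :=
        hμ_lim.eventually (eventually_ge_nhds (by linarith))
      obtain ⟨T', hT'⟩ := eventually_atTop.1 ((h1.and h2).and (eventually_ge_atTop T))
      refine ⟨max T' 0, le_max_right _ _, fun t ht => ?_⟩
      have htT' : T' ≤ t := le_trans (le_max_left _ _) ht
      obtain ⟨⟨hI, hμt⟩, htT⟩ := hT' t htT'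
      have ht0 : (0:ℝ) ≤ t := le_trans hT0 htT
      -- local bound on lam over [0, t]
      obtain ⟨C, hC⟩ := hlam_locbdd t
      have hM : ∀ s ∈ Set.Icc (0:ℝ) t, |lam s| ≤ max C 0 := fun s hs =>
        (hC s hs).trans (le_max_left _ _)
      have heq := hlam_sol t ht0
      have II1 : IntervalIntegrable (fun s => φ (t - s) * lam s) volume 0 T :=
        volterra_aux_intervalIntegrable φ lam hφ_meas hlam_meas t Cφ (max C 0) 0 T
          hCφ hM le_rfl hT0 htT
      have II2 : IntervalIntegrable (fun s => φ (t - s) * lam s) volume T t :=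
        volterra_aux_intervalIntegrable φ lam hφ_meas hlam_meas t Cφ (max C 0) T t
          hCφ hM hT0 htT le_rfl
      have hsplit : ∫ s in (0:ℝ)..t, φ (t - s) * lam s
          = (∫ s in (0:ℝ)..T, φ (t - s) * lam s) + ∫ s in T..t, φ (t - s) * lam s :=
        (intervalIntegral.integral_add_adjacent_intervals II1 II2).symm
      have hA : (0:ℝ) ≤ ∫ s in (0:ℝ)..T, φ (t - s) * lam s := by
        apply intervalIntegral.integral_nonneg hT0
        intro s hs
        have hts : (0:ℝ) ≤ t - s := by linarith [hs.2]
        exact mul_nonneg (hφ_pos _ hts).le (hlam_nonneg s hs.1)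
      have IIc : IntervalIntegrable (fun s => φ (t - s) * ((n : ℝ) * δ)) volume T t :=
        volterra_aux_intervalIntegrable φ (fun _ => (n : ℝ) * δ) hφ_meas measurable_const
          t Cφ ((n : ℝ) * δ) T t hCφ
          (fun s _ => by rw [abs_of_nonneg hnδ0]) hT0 htT le_rfl
      have hB : (∫ s in T..t, φ (t - s)) * ((n : ℝ) * δ)
          ≤ ∫ s in T..t, φ (t - s) * lam s := by
        rw [← intervalIntegral.integral_mul_const]
        apply intervalIntegral.integral_mono_on htT IIc II2
        intro s hs
        have hts : (0:ℝ) ≤ t - s := by linarith [hs.2]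
        exact mul_le_mul_of_nonneg_left (hT s hs.1) (hφ_pos _ hts).le
      have hchg : (∫ s in T..t, φ (t - s)) = ∫ s in (0:ℝ)..(t - T), φ s := by
        rw [intervalIntegral.integral_comp_sub_left φ t, sub_self]
      have hIlow : (1 - ε) * ((n : ℝ) * δ) ≤ (∫ s in T..t, φ (t - s)) * ((n : ℝ) * δ) := by
        rw [hchg]
        exact mul_le_mul_of_nonneg_right hI hnδ0
      push_cast
      have : ((n : ℝ) + 1) * δ = (n : ℝ) * δ + μinf / 2 := by rw [hδdef]; ring
      rw [this, heq, hsplit]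
      nlinarith [hεkey, hμt, hA, hB, hIlow]
  rw [tendsto_atTop]
  intro b
  obtain ⟨n, hn⟩ := exists_nat_ge (b / δ)
  have hbn : b ≤ (n : ℝ) * δ := by
    rw [div_le_iff₀ hδpos] at hn; linarith
  obtain ⟨T, _, hT⟩ := main n
  filter_upwards [eventually_ge_atTop T] with t ht
  exact hbn.trans (hT t ht)
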